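/- (Sufficiency of the complementary-slackness conditions.) Let {(q_i, ρ_i)}_{i=1}^N be an ensemble of qubit states. Suppose there exist a 2×2 complex Hermitian matrix K, real numbers r_i ≥ 0, qubit states σ_i, and an N-outcome POVM (M_i)_{i=1}^N such that K = q_i ρ_i + r_i σ_i for every i and r_i · Re(tr(σ_i M_i)) = 0 for every i. Then (M_i) is an optimal POVM and p_guess = ∑_i q_i Re(tr(ρ_i M_i)) = Re(tr K). -/

import Mathlib

open Matrix
open scoped ComplexOrder

noncomputable section

/-- The Pauli matrix σ_X. -/
def sigmaX : Matrix (Fin 2) (Fin 2) ℂ := !![0, 1; 1, 0]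

/-- The Pauli matrix σ_Y. -/
def sigmaY : Matrix (Fin 2) (Fin 2) ℂ := !![0, -Complex.I; Complex.I, 0]

/-- The Pauli matrix σ_Z. -/
def sigmaZ : Matrix (Fin 2) (Fin 2) ℂ := !![1, 0; 0, -1]

/-- `v · σ = v₁ σ_X + v₂ σ_Y + v₃ σ_Z` for a vector `v ∈ ℝ³`. -/
def pauliDot (v : EuclideanSpace ℝ (Fin 3)) : Matrix (Fin 2) (Fin 2) ℂ :=
  (v 0 : ℂ) • sigmaX + (v 1 : ℂ) • sigmaY + (v 2 : ℂ) • sigmaZ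

/-- A qubit state: a 2×2 complex positive semidefinite matrix with trace 1. -/
def IsQubitState (ρ : Matrix (Fin 2) (Fin 2) ℂ) : Prop :=
  ρ.PosSemidef ∧ ρ.trace = 1

/-- An `N`-outcome POVM: positive semidefinite matrices summing to the identity. -/
def IsPOVM {N : ℕ} (M : Fin N → Matrix (Fin 2) (Fin 2) ℂ) : Prop :=
  (∀ i, (M i).PosSemidef) ∧ ∑ i, M i = 1

/-- The guessing probability of the ensemble `{(q i, ρ i)}`:
the supremum over all `N`-outcome POVMs of `∑ i, q i · Re (tr (ρ i * M i))`. -/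
def pGuess {N : ℕ} (q : Fin N → ℝ) (ρ : Fin N → Matrix (Fin 2) (Fin 2) ℂ) : ℝ :=
  sSup {x : ℝ | ∃ M : Fin N → Matrix (Fin 2) (Fin 2) ℂ,
    IsPOVM M ∧ x = ∑ i, q i * ((ρ i * M i).trace).re}

/-- A POVM is optimal when it attains the guessing probability. -/
def IsOptimalPOVM {N : ℕ} (q : Fin N → ℝ) (ρ M : Fin N → Matrix (Fin 2) (Fin 2) ℂ) : Prop :=
  IsPOVM M ∧ ∑ i, q i * ((ρ i * M i).trace).re = pGuess q ρ

lemma psd_trace_re_nonneg {n : ℕ} {A : Matrix (Fin n) (Fin n) ℂ} (hA : A.PosSemidef) :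
    0 ≤ A.trace.re := by
  have h : ∀ i, 0 ≤ (A i i).re := by
    intro i
    have := hA.dotProduct_mulVec_nonneg (Pi.single i 1)
    have heq : star (Pi.single i 1) ⬝ᵥ A.mulVec (Pi.single i 1) = A i i := by
      simp [dotProduct, mulVec, Pi.single_apply]
    rw [heq] at this
    exact (Complex.le_def.mp this).1
  simp only [Matrix.trace, Matrix.diag, Complex.re_sum]
  exact Finset.sum_nonneg fun i _ => h i

lemma psd_trace_mul_re_nonneg {n : ℕ} {A B : Matrix (Fin n) (Fin n) ℂ}
    (hA : A.PosSemidef) (hB : B.PosSemidef) : 0 ≤ ((A * B).trace).re := by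
  obtain ⟨C, hC⟩ : ∃ C : Matrix (Fin n) (Fin n) ℂ, B = Cᴴ * C := by
    open MatrixOrder in
    obtain ⟨C, hC⟩ := CStarAlgebra.nonneg_iff_eq_star_mul_self.mp hB.nonneg
    exact ⟨C, hC⟩
  have h : (A * B).trace = (C * A * Cᴴ).trace := by
    rw [hC, ← Matrix.trace_mul_cycle, Matrix.mul_assoc]
  rw [h]
  exact psd_trace_re_nonneg (hA.mul_mul_conjTranspose_same C)

/-- Sufficiency of the complementary-slackness conditions. -/
theorem slackness_sufficient {N : ℕ} (q : Fin N → ℝ)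
    (ρ σ M : Fin N → Matrix (Fin 2) (Fin 2) ℂ)
    (K : Matrix (Fin 2) (Fin 2) ℂ) (r : Fin N → ℝ)
    (hq : ∀ i, 0 < q i) (hqsum : ∑ i, q i = 1)
    (hρ : ∀ i, IsQubitState (ρ i))
    (hK : K.IsHermitian) (hr : ∀ i, 0 ≤ r i)
    (hσ : ∀ i, IsQubitState (σ i))
    (hM : IsPOVM M)
    (hKeq : ∀ i, K = q i • ρ i + r i • σ i)
    (hslack : ∀ i, r i * ((σ i * M i).trace).re = 0) :
    IsOptimalPOVM q ρ M ∧ pGuess q ρ = K.trace.re := by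
  classical
  -- Key identity: for any POVM M', the value equals Re tr K minus slack terms.
  have hterm : ∀ (M' : Fin N → Matrix (Fin 2) (Fin 2) ℂ) (i : Fin N),
      q i * ((ρ i * M' i).trace).re
        = ((K * M' i).trace).re - r i * ((σ i * M' i).trace).re := by
    intro M' i
    have h1 : K * M' i = q i • (ρ i * M' i) + r i • (σ i * M' i) := by
      rw [hKeq i, add_mul, smul_mul_assoc, smul_mul_assoc]
    rw [h1]
    simp only [Matrix.trace_add, Matrix.trace_smul, Complex.add_re, Complex.smul_re, smul_eq_mul]
    ring
  have hsum : ∀ (M' : Fin N → Matrix (Fin 2) (Fin 2) ℂ), IsPOVM M' →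
      ∑ i, q i * ((ρ i * M' i).trace).re
        = K.trace.re - ∑ i, r i * ((σ i * M' i).trace).re := by
    intro M' hM'
    have h2 : ∑ i, ((K * M' i).trace).re = K.trace.re := by
      rw [← Complex.re_sum, ← Matrix.trace_sum, ← Finset.mul_sum, hM'.2, mul_one]
    calc ∑ i, q i * ((ρ i * M' i).trace).re
        = ∑ i, (((K * M' i).trace).re - r i * ((σ i * M' i).trace).re) := by
          exact Finset.sum_congr rfl fun i _ => hterm M' i
      _ = K.trace.re - ∑ i, r i * ((σ i * M' i).trace).re := by
          rw [Finset.sum_sub_distrib, h2]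
  -- Upper bound for any POVM
  have hub : ∀ x ∈ {x : ℝ | ∃ M' : Fin N → Matrix (Fin 2) (Fin 2) ℂ,
      IsPOVM M' ∧ x = ∑ i, q i * ((ρ i * M' i).trace).re}, x ≤ K.trace.re := by
    rintro x ⟨M', hM', rfl⟩
    rw [hsum M' hM']
    have : 0 ≤ ∑ i, r i * ((σ i * M' i).trace).re :=
      Finset.sum_nonneg fun i _ => mul_nonneg (hr i)
        (psd_trace_mul_re_nonneg (hσ i).1 (hM'.1 i))
    linarith
  -- The given POVM attains the bound
  have hval : ∑ i, q i * ((ρ i * M i).trace).re = K.trace.re := by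
    rw [hsum M hM]
    have : ∑ i, r i * ((σ i * M i).trace).re = 0 :=
      Finset.sum_eq_zero fun i _ => hslack i
    rw [this, sub_zero]
  have hmem : K.trace.re ∈ {x : ℝ | ∃ M' : Fin N → Matrix (Fin 2) (Fin 2) ℂ,
      IsPOVM M' ∧ x = ∑ i, q i * ((ρ i * M' i).trace).re} := ⟨M, hM, hval.symm⟩
  have hpg : pGuess q ρ = K.trace.re := by
    apply le_antisymm
    · exact csSup_le ⟨_, hmem⟩ hub
    · exact le_csSup ⟨K.trace.re, hub⟩ hmem
  exact ⟨⟨hM, by rw [hval, hpg]⟩, hpg⟩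


end
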